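/- Discrete-time hitting time tail lower bound (symmetric case): Let (Ω, ℱ, ℙ) be a probability space and (X_n)_{n≥1} an i.i.d. sequence of random variables with ℙ(X_n = 1) = ℙ(X_n = −1) = 1/2. Define the random walk V_0 = 1 and V_n = 1 + Σ_{k=1}^{n} X_k, and the hitting time γ = inf{n ≥ 0 : V_n = 0}. Then for every integer m ≥ 1, ℙ(γ ≥ 2m + 1) ≥ (1/√π) · e^{−1/(6m)} · 1/√(m+1). -/

import Mathlib

namespace HTW

def stepVal (b : Bool) : ℤ := if b then 1 else -1

noncomputable def psum {n : ℕ} (v : Fin n → Bool) (k : ℕ) : ℤ :=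
  ∑ i ∈ Finset.univ.filter (fun i : Fin n => (i : ℕ) < k), stepVal (v i)

lemma psum_snoc_le {n : ℕ} (v : Fin n → Bool) (b : Bool) {k : ℕ} (hk : k ≤ n) :
    psum (Fin.snoc v b) k = psum v k := by
  unfold psum
  rw [Finset.sum_filter, Finset.sum_filter, Fin.sum_univ_castSucc]
  simp only [Fin.coe_castSucc, Fin.snoc_castSucc, Fin.val_last, Fin.snoc_last]
  rw [if_neg (by omega)]
  simp

lemma psum_snoc_last {n : ℕ} (v : Fin n → Bool) (b : Bool) :
    psum (Fin.snoc v b) (n + 1) = psum v n + stepVal b := by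
  unfold psum
  rw [Finset.sum_filter, Finset.sum_filter, Fin.sum_univ_castSucc]
  simp only [Fin.coe_castSucc, Fin.snoc_castSucc, Fin.val_last, Fin.snoc_last]
  rw [if_pos (by omega)]
  congr 1
  apply Finset.sum_congr rfl
  intro i _
  have : (i : ℕ) < n := i.isLt
  rw [if_pos (by omega), if_pos (by omega)]

def ups {n : ℕ} (v : Fin n → Bool) : ℕ := (Finset.univ.filter (fun i => v i = true)).card

lemma psum_end {n : ℕ} (v : Fin n → Bool) : psum v n = 2 * (ups v : ℤ) - n := by
  unfold psum ups
  rw [Finset.filter_true_of_mem (by intro i _; exact i.isLt)]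
  have : ∀ b : Bool, stepVal b = 2 * (if b = true then (1:ℤ) else 0) - 1 := by decide
  simp_rw [this]
  rw [Finset.sum_sub_distrib, ← Finset.mul_sum, Finset.sum_boole, Finset.sum_const]
  simp

lemma ups_snoc {n : ℕ} (v : Fin n → Bool) (b : Bool) :
    ups (Fin.snoc v b) = ups v + (if b then 1 else 0) := by
  have h1 := psum_end (Fin.snoc v b)
  rw [psum_snoc_last, psum_end] at h1
  cases b <;> simp [stepVal] at h1 ⊢ <;> push_cast at h1 <;> omega

lemma good_snoc_iff {n : ℕ} (v : Fin n → Bool) (b : Bool) :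
    (∀ k ≤ n + 1, 0 ≤ psum (Fin.snoc v b) k) ↔
      (∀ k ≤ n, 0 ≤ psum v k) ∧ 0 ≤ psum v n + stepVal b := by
  constructor
  · intro h
    refine ⟨fun k hk => ?_, ?_⟩
    · rw [← psum_snoc_le v b hk]; exact h k (by omega)
    · rw [← psum_snoc_last v b]; exact h (n+1) le_rfl
  · rintro ⟨h1, h2⟩ k hk
    rcases Nat.lt_or_ge k (n+1) with hk' | hk'
    · rw [psum_snoc_le v b (by omega)]; exact h1 k (by omega)
    · have : k = n + 1 := by omega
      rw [this, psum_snoc_last]; exact h2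

noncomputable def W (n j : ℕ) : Finset (Fin n → Bool) :=
  Finset.univ.filter (fun v => (∀ k ≤ n, 0 ≤ psum v k) ∧ ups v = j)

lemma W_eq_empty {n j : ℕ} (h : 2 * j < n) : W n j = ∅ := by
  ext v
  simp only [W, Finset.mem_filter, Finset.mem_univ, true_and, Finset.notMem_empty, iff_false]
  rintro ⟨hg, hu⟩
  have := hg n le_rfl
  rw [psum_end, hu] at this
  have : (2 * j : ℤ) ≥ n := by omega
  exact absurd this (by exact_mod_cast not_le.mpr h)

lemma ups_le {n : ℕ} (v : Fin n → Bool) : ups v ≤ n :=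
  le_trans (Finset.card_filter_le _ _) (by simp)

lemma W_eq_empty' {n j : ℕ} (h : n < j) : W n j = ∅ := by
  ext v
  simp only [W, Finset.mem_filter, Finset.mem_univ, true_and, Finset.notMem_empty, iff_false]
  rintro ⟨-, hu⟩
  exact absurd (hu ▸ ups_le v) (by omega)

lemma choose_succ_le_of_half_le {n k : ℕ} (h : n ≤ 2 * k) :
    Nat.choose n (k + 1) ≤ Nat.choose n k := by
  rcases le_or_gt (k + 1) n with hkn | hkn
  · have e1 : Nat.choose n (k+1) = Nat.choose n (n - (k+1)) := (Nat.choose_symm hkn).symm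
    have e2 : Nat.choose n (n - k) = Nat.choose n k := Nat.choose_symm (by omega)
    have h1 : n - (k+1) < n / 2 := by omega
    have := Nat.choose_le_succ_of_lt_half_left h1
    have e3 : n - (k+1) + 1 = n - k := by omega
    rw [e3] at this
    omega
  · rw [Nat.choose_eq_zero_of_lt hkn]; exact Nat.zero_le _

lemma W_snoc_decomp (n j : ℕ) :
    W (n + 1) (j + 1) =
      ((W n j).image (fun v => Fin.snoc v true)) ∪
      (((W n (j+1)).filter (fun v => (n:ℤ) < 2 * (j+1))).image
        (fun v => Fin.snoc v false)) := by
  ext v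
  simp only [Finset.mem_union, Finset.mem_image, Finset.mem_filter, W, Finset.mem_univ, true_and]
  constructor
  · rintro ⟨hg, hu⟩
    have hv : Fin.snoc (Fin.init v) (v (Fin.last n)) = v := Fin.snoc_init_self v
    rcases Bool.eq_false_or_eq_true (v (Fin.last n)) with hb | hb
    · left
      refine ⟨Fin.init v, ⟨?_, ?_⟩, by rw [← hb, hv]⟩
      · rw [← hv, hb, good_snoc_iff] at hg; exact hg.1
      · rw [← hv, hb, ups_snoc] at hu; simpa using hu
    · -- last step down
      right
      refine ⟨Fin.init v, ⟨⟨?_, ?_⟩, ?_⟩, by rw [← hb, hv]⟩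
      · rw [← hv, hb, good_snoc_iff] at hg; exact hg.1
      · rw [← hv, hb, ups_snoc] at hu; simpa using hu
      · rw [← hv, hb, good_snoc_iff] at hg
        have h2 := hg.2
        rw [psum_end] at h2
        have hu2 : ups (Fin.init v) = j + 1 := by
          rw [← hv, hb, ups_snoc] at hu; simpa using hu
        rw [hu2] at h2
        simp only [stepVal, if_neg, Bool.false_eq_true] at h2
        push_cast at h2 ⊢
        omega
  · rintro (⟨w, ⟨hg, hu⟩, rfl⟩ | ⟨w, ⟨⟨hg, hu⟩, hn⟩, rfl⟩)
    · constructor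
      · rw [good_snoc_iff]
        exact ⟨hg, by have := hg n le_rfl; simp [stepVal]; omega⟩
      · rw [ups_snoc, hu]; simp
    · constructor
      · rw [good_snoc_iff]
        refine ⟨hg, ?_⟩
        rw [psum_end, hu]
        simp only [stepVal, if_neg]
        push_cast
        push_cast at hn
        omega
      · rw [ups_snoc, hu]; simp

end HTW

namespace HTW

lemma choose_succ_le' {n k : ℕ} (h : n ≤ 2 * k + 1) :
    Nat.choose n (k + 1) ≤ Nat.choose n k := by
  rcases Nat.lt_or_ge n (2 * k + 1) with h' | h'
  · exact choose_succ_le_of_half_le (by omega)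
  · have : n = 2 * k + 1 := by omega
    subst this
    rw [Nat.choose_symm_half]

lemma le_choose_succ' {n k : ℕ} (h : 2 * k + 1 ≤ n) :
    Nat.choose n k ≤ Nat.choose n (k + 1) := by
  rcases Nat.lt_or_ge (2 * k + 1) n with h' | h'
  · exact Nat.choose_le_succ_of_lt_half_left (by omega)
  · have : n = 2 * k + 1 := by omega
    subst this
    rw [Nat.choose_symm_half]

lemma snoc_inj {n : ℕ} (b : Bool) :
    Function.Injective (fun v : Fin n → Bool => Fin.snoc v b : _ → Fin (n+1) → Bool) := by
  intro v w h
  have := congrArg Fin.init h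
  simpa [Fin.init_snoc] using this

lemma W_card (n : ℕ) : ∀ j, (W n j).card = Nat.choose n j - Nat.choose n (j + 1) := by
  induction n with
  | zero =>
    intro j
    cases j with
    | zero =>
      have : W 0 0 = Finset.univ := by
        ext v
        simp only [W, Finset.mem_filter, Finset.mem_univ, true_and, iff_true]
        constructor
        · intro k hk
          have : k = 0 := by omega
          subst this
          simp [psum]
        · unfold ups
          rw [Finset.filter_eq_empty_iff.mpr (fun i _ => absurd i.isLt (by omega))]
          rfl
      rw [this]
      simp
    | succ jj =>
      rw [W_eq_empty' (by omega)]
      simp [Nat.choose_eq_zero_of_lt]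
  | succ n ih =>
    intro j
    cases j with
    | zero =>
      rw [W_eq_empty (by omega)]
      simp [Nat.choose_one_right]
    | succ jj =>
      rw [W_snoc_decomp]
      rw [Finset.card_union_of_disjoint]
      · rw [Finset.card_image_of_injective _ (snoc_inj true),
          Finset.card_image_of_injective _ (snoc_inj false)]
        rcases Nat.lt_or_ge (n : ℕ) (2 * (jj + 1)) with hcase | hcase
        · rw [Finset.filter_true_of_mem (by intro v _; exact_mod_cast hcase)]
          rw [ih jj, ih (jj + 1)]
          have hP1 : Nat.choose (n+1) (jj+1) = Nat.choose n jj + Nat.choose n (jj+1) :=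
            Nat.choose_succ_succ n jj
          have hP2 : Nat.choose (n+1) (jj+1+1) = Nat.choose n (jj+1) + Nat.choose n (jj+1+1) :=
            Nat.choose_succ_succ n (jj+1)
          have hA : Nat.choose n (jj+1+1) ≤ Nat.choose n (jj+1) :=
            choose_succ_le' (by omega)
          have hB : Nat.choose n (jj+1) ≤ Nat.choose n jj :=
            choose_succ_le' (by omega)
          omega
        · have hfe : (W n (jj+1)).filter (fun v => (n:ℤ) < 2 * (jj+1)) = ∅ := by
            apply Finset.filter_eq_empty_iff.mpr
            intro v _
            push_neg
            exact_mod_cast hcase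
          rw [hfe, W_eq_empty (by omega)]
          have : Nat.choose (n+1) (jj+1) ≤ Nat.choose (n+1) (jj+1+1) :=
            le_choose_succ' (by omega)
          simp only [Finset.card_empty]
          omega
      · rw [Finset.disjoint_left]
        rintro v hv1 hv2
        rcases Finset.mem_image.mp hv1 with ⟨w, _, rfl⟩
        rcases Finset.mem_image.mp hv2 with ⟨w', _, he⟩
        have := congrFun he (Fin.last n)
        simp at this

noncomputable def G (n : ℕ) : Finset (Fin n → Bool) :=
  Finset.univ.filter (fun v => ∀ k ≤ n, 0 ≤ psum v k)

lemma W_eq_filter (n j : ℕ) : W n j = (G n).filter (fun v => ups v = j) := by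
  unfold W G
  rw [Finset.filter_filter]

lemma G_card_eq_sum (n : ℕ) : (G n).card = ∑ j ∈ Finset.range (n + 1), (W n j).card := by
  simp_rw [W_eq_filter]
  apply Finset.card_eq_sum_card_fiberwise (f := ups)
  intro v _
  simp only [Finset.mem_coe, Finset.mem_range]
  have := ups_le v
  omega

lemma sum_range_tsub_anti {f : ℕ → ℕ} (h : ∀ i, f (i + 1) ≤ f i) (n : ℕ) :
    ∑ i ∈ Finset.range n, (f i - f (i + 1)) = f 0 - f n := by
  have ha : Antitone f := antitone_nat_of_succ_le h
  induction n with
  | zero => simp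
  | succ n ih =>
    rw [Finset.sum_range_succ, ih]
    have h1 : f (n + 1) ≤ f n := h n
    have h2 : f n ≤ f 0 := ha (Nat.zero_le n)
    omega

lemma G_card (m : ℕ) : (G (2 * m)).card = Nat.centralBinom m := by
  rw [G_card_eq_sum]
  simp_rw [W_card]
  have hterm : ∀ j, Nat.choose (2 * m) j - Nat.choose (2 * m) (j + 1)
      = Nat.choose (2 * m) (max j m) - Nat.choose (2 * m) (max (j + 1) m) := by
    intro j
    rcases Nat.lt_or_ge j m with hj | hj
    · have h1 : Nat.choose (2*m) j ≤ Nat.choose (2*m) (j+1) := le_choose_succ' (by omega)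
      have h2 : max j m = m := by omega
      have h3 : max (j+1) m = m := by omega
      rw [h2, h3]
      omega
    · have h2 : max j m = j := by omega
      have h3 : max (j+1) m = j + 1 := by omega
      rw [h2, h3]
  simp_rw [hterm]
  rw [sum_range_tsub_anti]
  · have h0 : max 0 m = m := by omega
    have h1 : max (2 * m + 1) m = 2 * m + 1 := by omega
    rw [h0, h1, Nat.choose_eq_zero_of_lt (show 2 * m < 2 * m + 1 by omega),
      Nat.centralBinom_eq_two_mul_choose]
    omega
  · intro i
    rcases Nat.lt_or_ge i m with hi | hi
    · have h2 : max i m = m := by omega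
      rcases Nat.lt_or_ge (i+1) m with hi1 | hi1
      · have h3 : max (i+1) m = m := by omega
        rw [h2, h3]
      · have h3 : max (i+1) m = i + 1 := by omega
        rw [h2, h3]
        have : i + 1 = m ∨ i + 1 = m + 1 := by omega
        rcases this with h4 | h4
        · rw [h4]
        · exact absurd h4 (by omega)
    · have h2 : max i m = i := by omega
      have h3 : max (i+1) m = i + 1 := by omega
      rw [h2, h3]
      exact choose_succ_le' (by omega)

end HTW


open Real Filter Nat Topology

namespace HTW

noncomputable def cb (m : ℕ) : ℝ := (Nat.centralBinom m : ℝ) / 4 ^ m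

lemma cb_pos (m : ℕ) : 0 < cb m := by
  apply _root_.div_pos _ (by positivity)
  exact_mod_cast Nat.centralBinom_pos m

lemma cb_succ (m : ℕ) : cb (m + 1) = cb m * (2 * m + 1) / (2 * m + 2) := by
  have hm1 : ((m:ℝ) + 1) ≠ 0 := by positivity
  have hCB : (Nat.centralBinom (m+1) : ℝ) = 2 * (2*m+1) * (Nat.centralBinom m) / (m+1) := by
    rw [eq_div_iff hm1]
    have h := Nat.succ_mul_centralBinom_succ m
    have h' : ((m:ℝ) + 1) * (Nat.centralBinom (m+1) : ℝ)
        = 2 * (2 * m + 1) * (Nat.centralBinom m : ℝ) := by exact_mod_cast h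
    linarith [h']
  unfold cb
  rw [hCB]
  have h4 : (4:ℝ) ^ (m+1) = 4 * 4 ^ m := by ring
  rw [h4]
  field_simp
  ring

noncomputable def fwallis (m : ℕ) : ℝ := Real.pi * (m + 1) * (cb m) ^ 2

lemma fwallis_antitone : Antitone fwallis := by
  apply antitone_nat_of_succ_le
  intro m
  unfold fwallis
  rw [cb_succ, div_pow, mul_pow]
  push_cast
  rw [← mul_div_assoc, div_le_iff₀ (by positivity)]
  have key : ((m:ℝ) + 1 + 1) * (2 * m + 1)^2 ≤ ((m:ℝ) + 1) * (2*m+2)^2 := by nlinarith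
  have hh := mul_le_mul_of_nonneg_left key
    (show (0:ℝ) ≤ Real.pi * cb m ^ 2 by positivity)
  nlinarith [hh]

lemma cb_eq_stirling {m : ℕ} (hm : 1 ≤ m) :
    cb m = Stirling.stirlingSeq (2 * m) / (Stirling.stirlingSeq m ^ 2 * Real.sqrt m) := by
  have hm0 : (0:ℝ) < m := by exact_mod_cast hm
  have hsm : (0:ℝ) < Real.sqrt m := Real.sqrt_pos.mpr hm0
  have hfact : (0:ℝ) < (m ! : ℝ) := by exact_mod_cast m.factorial_pos
  have hepos : (0:ℝ) < Real.exp 1 := Real.exp_pos 1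
  have hb : (0:ℝ) < ((m:ℝ)/Real.exp 1)^m := by positivity
  have hstm : Stirling.stirlingSeq m = (m ! : ℝ) / (Real.sqrt (2*m) * ((m:ℝ)/Real.exp 1)^m) :=
    rfl
  have hst2m : Stirling.stirlingSeq (2*m)
      = ((2*m)! : ℝ) / (Real.sqrt (2*(2*m : ℕ)) * (((2*m : ℕ):ℝ)/Real.exp 1)^(2*m)) := rfl
  have hcb : cb m = ((2*m)! : ℝ) / ((m ! : ℝ) * (m ! : ℝ) * 4 ^ m) := by
    unfold cb
    rw [Nat.centralBinom_eq_two_mul_choose, Nat.cast_choose ℝ (by omega)]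
    have h2m : 2 * m - m = m := by omega
    rw [h2m]
    field_simp
  have hsqrt2m : Real.sqrt (2 * (m:ℝ)) = Real.sqrt 2 * Real.sqrt m :=
    Real.sqrt_mul (by norm_num) _
  have hsqrt4m : Real.sqrt (2 * ((2*m : ℕ) : ℝ)) = 2 * Real.sqrt m := by
    push_cast
    rw [show (2:ℝ) * (2*(m:ℝ)) = 4 * m by ring, Real.sqrt_mul (by norm_num) _,
      show (4:ℝ) = 2^2 by norm_num, Real.sqrt_sq (by norm_num)]
  have hpow : (((2*m : ℕ):ℝ)/Real.exp 1)^(2*m) = 4^m * (((m:ℝ))/Real.exp 1)^(2*m) := by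
    push_cast
    rw [show (2*(m:ℝ))/Real.exp 1 = 2 * ((m:ℝ)/Real.exp 1) by ring, mul_pow, pow_mul]
    norm_num
  have hsq2 : Real.sqrt 2 ^ 2 = 2 := Real.sq_sqrt (by norm_num)
  rw [hst2m, hstm, hcb, hsqrt4m, hsqrt2m, hpow]
  have hb2 : ((m:ℝ)/Real.exp 1)^(2*m) = (((m:ℝ)/Real.exp 1)^m)^2 := by
    rw [← pow_mul, mul_comm]
  rw [hb2]
  field_simp
  ring_nf
  rw [hsq2]

end HTW

namespace HTW

lemma fwallis_tendsto : Tendsto fwallis atTop (𝓝 1) := by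
  have h1 : Tendsto (fun m : ℕ => Stirling.stirlingSeq (2 * m)) atTop (𝓝 (Real.sqrt π)) :=
    Stirling.tendsto_stirlingSeq_sqrt_pi.comp
      (Filter.tendsto_atTop_mono (fun n : ℕ => by simp only [id_eq]; omega) Filter.tendsto_id)
  have h2 : Tendsto (fun m : ℕ => (1:ℝ) + 1 / m) atTop (𝓝 (1 + 0)) :=
    tendsto_const_nhds.add tendsto_one_div_atTop_nhds_zero_nat
  have hpi := Real.pi_pos
  have hsq : Real.sqrt π ^ 2 = π := Real.sq_sqrt hpi.le
  have h4 : Real.sqrt π ^ 4 ≠ 0 := by positivity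
  have hg : Tendsto (fun m : ℕ => Real.pi * (1 + 1/m) * (Stirling.stirlingSeq (2*m))^2
      / (Stirling.stirlingSeq m)^4) atTop
      (𝓝 (Real.pi * (1 + 0) * (Real.sqrt π)^2 / (Real.sqrt π)^4)) :=
    ((tendsto_const_nhds.mul h2).mul (h1.pow 2)).div
      (Stirling.tendsto_stirlingSeq_sqrt_pi.pow 4) h4
  have hval : Real.pi * (1 + 0) * (Real.sqrt π)^2 / (Real.sqrt π)^4 = 1 := by
    rw [show Real.sqrt π ^ 4 = (Real.sqrt π ^ 2)^2 by ring, hsq]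
    field_simp
    ring
  rw [hval] at hg
  apply hg.congr'
  filter_upwards [eventually_ge_atTop 1] with m hm
  have hm0 : (0:ℝ) < m := by exact_mod_cast hm
  have hsm : (0:ℝ) < Real.sqrt m := Real.sqrt_pos.mpr hm0
  have hsp : (0:ℝ) < Stirling.stirlingSeq m := by
    obtain ⟨k, rfl⟩ : ∃ k, m = k + 1 := ⟨m - 1, by omega⟩
    exact Stirling.stirlingSeq'_pos k
  unfold fwallis
  rw [cb_eq_stirling hm]
  rw [div_pow, mul_pow]
  have hms : Real.sqrt m ^ 2 = m := Real.sq_sqrt hm0.le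
  rw [hms]
  have : (Stirling.stirlingSeq m ^ 2)^2 = Stirling.stirlingSeq m ^ 4 := by ring
  rw [this]
  field_simp

lemma one_le_fwallis (m : ℕ) : 1 ≤ fwallis m :=
  fwallis_antitone.le_of_tendsto fwallis_tendsto m

lemma cb_lower (m : ℕ) : 1 / Real.sqrt (Real.pi * (m + 1)) ≤ cb m := by
  have h := one_le_fwallis m
  unfold fwallis at h
  have hP : (0:ℝ) < Real.pi * (m+1) := by positivity
  have h2 : 1 / (Real.pi * (m+1)) ≤ cb m ^ 2 := by
    rw [div_le_iff₀ hP]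
    nlinarith
  calc 1 / Real.sqrt (Real.pi * (m+1)) = Real.sqrt (1 / (Real.pi * (m+1))) := by
        rw [one_div, one_div, Real.sqrt_inv]
    _ ≤ Real.sqrt (cb m ^ 2) := Real.sqrt_le_sqrt h2
    _ = cb m := Real.sqrt_sq (cb_pos m).le

lemma real_bound (m : ℕ) :
    (1 / Real.sqrt Real.pi) * Real.exp (-1 / (6 * m)) * (1 / Real.sqrt (m + 1))
      ≤ (Nat.centralBinom m : ℝ) * (1/2) ^ (2 * m) := by
  have hcb : (Nat.centralBinom m : ℝ) * (1/2) ^ (2*m) = cb m := by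
    unfold cb
    rw [pow_mul, show ((1:ℝ)/2)^2 = (4:ℝ)⁻¹ by norm_num, inv_pow, ← div_eq_mul_inv]
  rw [hcb]
  have hexp : Real.exp (-1 / (6 * m)) ≤ 1 := by
    rw [Real.exp_le_one_iff]
    rcases Nat.eq_zero_or_pos m with h | h
    · simp [h]
    · have : (0:ℝ) < 6 * m := by positivity
      rw [div_nonpos_iff]
      right
      constructor <;> linarith
  have hs1 : (0:ℝ) < Real.sqrt Real.pi := Real.sqrt_pos.mpr Real.pi_pos
  have hs2 : (0:ℝ) < Real.sqrt ((m:ℝ) + 1) := Real.sqrt_pos.mpr (by positivity)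
  have step1 : (1 / Real.sqrt Real.pi) * Real.exp (-1 / (6 * m)) * (1 / Real.sqrt (m + 1))
      ≤ (1 / Real.sqrt Real.pi) * 1 * (1 / Real.sqrt (m + 1)) := by
    apply mul_le_mul_of_nonneg_right _ (by positivity)
    apply mul_le_mul_of_nonneg_left hexp (by positivity)
  apply le_trans step1
  rw [mul_one]
  have : (1 / Real.sqrt Real.pi) * (1 / Real.sqrt ((m:ℝ) + 1))
      = 1 / Real.sqrt (Real.pi * (m + 1)) := by
    rw [Real.sqrt_mul Real.pi_pos.le]
    ring
  rw [this]
  exact cb_lower m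

end HTW


namespace HTW

lemma psum_succ {n : ℕ} (v : Fin n → Bool) {k : ℕ} (hk : k < n) :
    psum v (k + 1) = psum v k + stepVal (v ⟨k, hk⟩) := by
  unfold psum
  have hset : Finset.univ.filter (fun i : Fin n => (i : ℕ) < k + 1)
      = insert ⟨k, hk⟩ (Finset.univ.filter (fun i : Fin n => (i : ℕ) < k)) := by
    ext i
    simp only [Finset.mem_filter, Finset.mem_univ, true_and, Finset.mem_insert]
    constructor
    · intro h
      rcases Nat.lt_or_ge (i : ℕ) k with h' | h'
      · exact Or.inr h'
      · left
        have : (i : ℕ) = k := by omega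
        exact Fin.ext this
    · rintro (rfl | h)
      · simp
      · omega
  rw [hset, Finset.sum_insert (by simp)]
  ring

def sigma' {n : ℕ} (v : Fin n → Bool) (k : ℕ) : ℤ :=
  if h : k - 1 < n then stepVal (v ⟨k - 1, h⟩) else 1

lemma sum_sigma_eq_psum {n : ℕ} (v : Fin n → Bool) {k : ℕ} (hk : k ≤ n) :
    ∑ j ∈ Finset.Icc 1 k, sigma' v j = psum v k := by
  induction k with
  | zero => simp [psum]
  | succ k ih =>
    rw [Finset.sum_Icc_succ_top (by omega), ih (by omega),
      psum_succ v (show k < n by omega)]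
    have : sigma' v (k + 1) = stepVal (v ⟨k, by omega⟩) := by
      unfold sigma'
      rw [dif_pos (show k + 1 - 1 < n by omega)]
      congr 1
    rw [this]

end HTW

namespace HTW

lemma sigma'_succ {n : ℕ} (v : Fin n → Bool) (i : Fin n) :
    sigma' v ((i : ℕ) + 1) = stepVal (v i) := by
  unfold sigma'
  rw [dif_pos (show (i : ℕ) + 1 - 1 < n by omega)]
  congr 1
  all_goals exact Fin.ext (by omega)

lemma stepVal_inj {a b : Bool} (h : stepVal a = stepVal b) : a = b := by
  cases a <;> cases b <;> simp_all [stepVal]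

lemma sigma'_mem {n : ℕ} (v : Fin n → Bool) (k : ℕ) :
    sigma' v k = 1 ∨ sigma' v k = -1 := by
  unfold sigma' stepVal
  split
  · split
    · exact Or.inl rfl
    · exact Or.inr rfl
  · exact Or.inl rfl

end HTW

open MeasureTheory ProbabilityTheory

/-- Discrete-time hitting time tail lower bound (symmetric case): for an i.i.d. ±1
symmetric random walk `V_n = 1 + Σ_{k=1}^n X_k` (with `ℙ(X = 1) = ℙ(X = −1) = 1/2`)
and hitting time `γ = inf{n : V_n = 0}` (valued in `ℕ∞`), for every `m ≥ 1`:
`ℙ(γ ≥ 2m+1) ≥ (1/√π)·e^{−1/(6m)}·1/√(m+1)`. -/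
theorem discrete_hitting_time_tail_lower_bound
    {Ω : Type*} [MeasurableSpace Ω] (μ : Measure Ω) [IsProbabilityMeasure μ]
    (X : ℕ → Ω → ℤ) (hXmeas : ∀ n, Measurable (X n))
    (hindep : iIndepFun X μ)
    (hup : ∀ n, μ {ω | X n ω = 1} = ENNReal.ofReal (1 / 2))
    (hdown : ∀ n, μ {ω | X n ω = -1} = ENNReal.ofReal (1 / 2))
    (V : ℕ → Ω → ℤ) (hV : ∀ n ω, V n ω = 1 + ∑ k ∈ Finset.Icc 1 n, X k ω)
    (γ : Ω → ℕ∞) (hγ : ∀ ω, γ ω = sInf {t : ℕ∞ | ∃ n : ℕ, (n : ℕ∞) = t ∧ V n ω = 0})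
    (m : ℕ) (hm : 1 ≤ m) :
    ENNReal.ofReal
        ((1 / Real.sqrt Real.pi) * Real.exp (-1 / (6 * m)) * (1 / Real.sqrt (m + 1)))
      ≤ μ {ω | ((2 * m + 1 : ℕ) : ℕ∞) ≤ γ ω} := by
  classical
  let A : (Fin (2 * m) → Bool) → Set Ω :=
    fun v => ⋂ k ∈ Finset.Icc 1 (2 * m), {ω | X k ω = HTW.sigma' v k}
  have hAmeas : ∀ v, MeasurableSet (A v) := by
    intro v
    apply MeasurableSet.biInter (Finset.Icc 1 (2 * m)).countable_toSet
    intro k _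
    exact (hXmeas k) (measurableSet_singleton _)
  have hmeasA : ∀ v : Fin (2 * m) → Bool, μ (A v) = ENNReal.ofReal (1 / 2) ^ (2 * m) := by
    intro v
    have hbi := hindep.meas_biInter (S := Finset.Icc 1 (2 * m))
      (s := fun k => {ω | X k ω = HTW.sigma' v k})
      (fun k _ => ⟨{HTW.sigma' v k}, measurableSet_singleton _, by rfl⟩)
    have hhalf : ∀ k ∈ Finset.Icc 1 (2 * m), μ {ω | X k ω = HTW.sigma' v k}
        = ENNReal.ofReal (1 / 2) := by
      intro k _
      rcases HTW.sigma'_mem v k with h | h <;> rw [h]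
      · exact hup k
      · exact hdown k
    show μ (⋂ k ∈ Finset.Icc 1 (2 * m), {ω | X k ω = HTW.sigma' v k}) = _
    rw [hbi, Finset.prod_congr rfl hhalf, Finset.prod_const, Nat.card_Icc]
    norm_num
  have hdisj : (↑(HTW.G (2 * m)) : Set (Fin (2 * m) → Bool)).PairwiseDisjoint A := by
    intro v _ w _ hvw
    rw [Function.onFun, Set.disjoint_left]
    intro ω hv hw
    have hex : ∃ i, v i ≠ w i := by
      by_contra h
      push_neg at h
      exact hvw (funext h)
    obtain ⟨i, hi⟩ := hex
    have hmem : (i : ℕ) + 1 ∈ Finset.Icc 1 (2 * m) :=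
      Finset.mem_Icc.mpr ⟨by omega, by have := i.isLt; omega⟩
    have h1 : X ((i : ℕ) + 1) ω = HTW.sigma' v ((i : ℕ) + 1) :=
      Set.mem_iInter₂.mp hv _ hmem
    have h2 : X ((i : ℕ) + 1) ω = HTW.sigma' w ((i : ℕ) + 1) :=
      Set.mem_iInter₂.mp hw _ hmem
    rw [HTW.sigma'_succ] at h1 h2
    exact hi (HTW.stepVal_inj (h1.symm.trans h2))
  have hsub : ∀ v ∈ HTW.G (2 * m), A v ⊆ {ω | ((2 * m + 1 : ℕ) : ℕ∞) ≤ γ ω} := by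
    intro v hv ω hω
    simp only [Set.mem_setOf_eq]
    rw [hγ]
    apply le_sInf
    rintro t ⟨nn, rfl, hVnn⟩
    have hcast : ((2 * m + 1 : ℕ) : ℕ∞) ≤ (nn : ℕ∞) ↔ 2 * m + 1 ≤ nn := Nat.cast_le
    rw [hcast]
    by_contra hlt
    push_neg at hlt
    have hXk : ∀ k ∈ Finset.Icc 1 (2 * m), X k ω = HTW.sigma' v k :=
      fun k hk => Set.mem_iInter₂.mp hω k hk
    have hVval : V nn ω = 1 + HTW.psum v nn := by
      rw [hV]
      congr 1
      rw [← HTW.sum_sigma_eq_psum v (show nn ≤ 2 * m by omega)]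
      apply Finset.sum_congr rfl
      intro j hj
      rcases Finset.mem_Icc.mp hj with ⟨hj1, hj2⟩
      exact hXk j (Finset.mem_Icc.mpr ⟨hj1, by omega⟩)
    have hg : 0 ≤ HTW.psum v nn := by
      have hvG := (Finset.mem_filter.mp hv).2
      exact hvG nn (by omega)
    rw [hVval] at hVnn
    omega
  calc ENNReal.ofReal
        ((1 / Real.sqrt Real.pi) * Real.exp (-1 / (6 * m)) * (1 / Real.sqrt (m + 1)))
      ≤ ENNReal.ofReal ((Nat.centralBinom m : ℝ) * (1 / 2) ^ (2 * m)) :=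
        ENNReal.ofReal_le_ofReal (HTW.real_bound m)
    _ = (Nat.centralBinom m : ENNReal) * ENNReal.ofReal (1 / 2) ^ (2 * m) := by
        rw [ENNReal.ofReal_mul (by positivity), ENNReal.ofReal_pow (by norm_num),
          ENNReal.ofReal_natCast]
    _ = ∑ v ∈ HTW.G (2 * m), μ (A v) := by
        rw [Finset.sum_congr rfl (fun v _ => hmeasA v), Finset.sum_const, HTW.G_card,
          nsmul_eq_mul]
    _ = μ (⋃ v ∈ HTW.G (2 * m), A v) :=
        (measure_biUnion_finset hdisj (fun v _ => hAmeas v)).symm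
    _ ≤ μ {ω | ((2 * m + 1 : ℕ) : ℕ∞) ≤ γ ω} := by
        apply measure_mono
        exact Set.iUnion₂_subset hsub
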